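/- Suspension respects composition: for linear subspaces U ⊆ V of W and any subset P ⊆ S(W) ∩ U, one has Susp_V(Susp_U(P) ∩ V) = Susp_U(P); that is, suspending P from U into V and then suspending the result from V into W agrees exactly with suspending P from U into W. -/

import Mathlib

open scoped RealInnerProductSpace

variable {W : Type*} [NormedAddCommGroup W] [InnerProductSpace ℝ W] [FiniteDimensional ℝ W]

/-- The suspension of a subset `P` of the unit sphere `S(W)` from a linear subspace `V ⊆ W`:
the set of unit vectors `x` such that the orthogonal projection `P_V x` of `x` to `V` is zero,
or is nonzero and normalizes to a point of `P`. -/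
noncomputable def susp (V : Submodule ℝ W) (P : Set W) : Set W :=
  {x : W | ‖x‖ = 1 ∧
    (((Submodule.orthogonalProjectionOnto V x : W) = 0) ∨
      ((Submodule.orthogonalProjectionOnto V x : W) ≠ 0 ∧
        ‖(Submodule.orthogonalProjectionOnto V x : W)‖⁻¹ • (Submodule.orthogonalProjectionOnto V x : W) ∈ P))}

/-- **Suspension respects composition**: for linear subspaces `U ⊆ V` of `W` and a subset
`P ⊆ S(W) ∩ U`, suspending `P` from `U` into `V` and then suspending the result from `V`
into `W` agrees with suspending `P` from `U` into `W`. -/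
theorem susp_susp (U V : Submodule ℝ W) (hUV : U ≤ V) (P : Set W)
    (hP : P ⊆ {x : W | ‖x‖ = 1} ∩ (U : Set W)) :
    susp V (susp U P ∩ (V : Set W)) = susp U P := by

  ext x
  set p : W := (Submodule.orthogonalProjectionOnto V x : W) with hp
  set q : W := (Submodule.orthogonalProjectionOnto U x : W) with hq
  have hpq : ((Submodule.orthogonalProjectionOnto U p : W)) = q := by
    rw [hp, hq]; exact congrArg Subtype.val (Submodule.orthogonalProjectionOnto_starProjection_of_le hUV x)
  have hpV : p ∈ V := (Submodule.orthogonalProjectionOnto V x).2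
  constructor
  · rintro ⟨hx, h | ⟨hp0, ⟨hy1, hy2⟩, hyV⟩⟩
    · refine ⟨hx, Or.inl ?_⟩
      have : q = 0 := by rw [← hpq, show p = 0 from h]; simp
      exact this
    · have hpn : ‖p‖ ≠ 0 := norm_ne_zero_iff.mpr hp0
      have key : ((Submodule.orthogonalProjectionOnto U (‖p‖⁻¹ • p) : W)) = ‖p‖⁻¹ • q := by
        rw [map_smul]; push_cast [hpq]; ring_nf
      rw [key] at hy2
      rcases hy2 with h0 | ⟨hq0, hmem⟩
      · refine ⟨hx, Or.inl ?_⟩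
        have := smul_eq_zero.mp h0
        rcases this with h1 | h2
        · exact absurd h1 (inv_ne_zero hpn)
        · exact h2
      · have hqne : q ≠ 0 := by
          intro h; apply hq0; rw [h, smul_zero]
        have hns : ‖(‖p‖⁻¹ • q)‖⁻¹ • (‖p‖⁻¹ • q) = ‖q‖⁻¹ • q := by
          rw [norm_smul, smul_smul, Real.norm_eq_abs, abs_inv, abs_norm, mul_inv,
            inv_inv, mul_assoc, mul_comm ‖q‖⁻¹, ← mul_assoc, mul_inv_cancel₀ hpn, one_mul]
        rw [hns] at hmem
        exact ⟨hx, Or.inr ⟨hqne, hmem⟩⟩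
  · rintro ⟨hx, h⟩
    refine ⟨hx, ?_⟩
    by_cases hp0 : p = 0
    · exact Or.inl hp0
    right
    have hpn : ‖p‖ ≠ 0 := norm_ne_zero_iff.mpr hp0
    refine ⟨hp0, ?_, V.smul_mem _ hpV⟩
    have key : ((Submodule.orthogonalProjectionOnto U (‖p‖⁻¹ • p) : W)) = ‖p‖⁻¹ • q := by
      rw [map_smul]; push_cast [hpq]; ring_nf
    refine ⟨norm_smul_inv_norm hp0, ?_⟩
    rw [key]
    rcases h with h0 | ⟨hq0, hmem⟩
    · exact Or.inl (by rw [show q = 0 from h0, smul_zero])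
    · right
      have hsne : ‖p‖⁻¹ • q ≠ 0 := smul_ne_zero (inv_ne_zero hpn) hq0
      refine ⟨hsne, ?_⟩
      have hns : ‖(‖p‖⁻¹ • q)‖⁻¹ • (‖p‖⁻¹ • q) = ‖q‖⁻¹ • q := by
        rw [norm_smul, smul_smul, Real.norm_eq_abs, abs_inv, abs_norm, mul_inv,
          inv_inv, mul_assoc, mul_comm ‖q‖⁻¹, ← mul_assoc, mul_inv_cancel₀ hpn, one_mul]
      rw [hns]
      exact hmem
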